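/- Let S' be a possibly disconnected surface obtained from a surface S (with k components, total Euler genus g, and b boundary components) by a sequence of essential cutting operations. Then the number of connected components of S' is at most k + g + b. -/
import Mathlib


/-- A connected component of a possibly disconnected surface with boundary, recorded
(following the classification of surfaces) by its Euler genus and its number of
boundary components. -/
structure SurfComp where
  genus : ℕ
  boundary : ℕ
deriving DecidableEq

/-- A possibly disconnected surface with boundary, up to homeomorphism. -/
abbrev BSurf := Multiset SurfComp

/-- Total Euler genus. -/
def totGenus (S : BSurf) : ℕ := (S.map SurfComp.genus).sum

/-- Total number of boundary components. -/
def totBoundary (S : BSurf) : ℕ := (S.map SurfComp.boundary).sum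

/-- Number of connected components. -/
def nComp (S : BSurf) : ℕ := Multiset.card S

/-- An essential cutting operation (cutting along a non-contractible simple closed
curve in the interior and attaching disks to the new boundary circles): either it
reduces the Euler genus of one component by 1 or 2, keeping the number of components,
or it splits one component into two components whose genera sum to that of the original
and whose boundary components are partitioned among them, each new component having
positive genus or containing a boundary component. -/
def EssCut (S S' : BSurf) : Prop :=
  (∃ C ∈ S, ∃ d : ℕ, (d = 1 ∨ d = 2) ∧ d ≤ C.genus ∧
      S' = (S.erase C) + {⟨C.genus - d, C.boundary⟩})
  ∨ (∃ C ∈ S, ∃ C₁ C₂ : SurfComp, C₁.genus + C₂.genus = C.genus ∧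
      C₁.boundary + C₂.boundary = C.boundary ∧
      (0 < C₁.genus ∨ 0 < C₁.boundary) ∧ (0 < C₂.genus ∨ 0 < C₂.boundary) ∧
      S' = (S.erase C) + {C₁, C₂})

/-- The potential `φ(S) = 2·(total genus) − (number of components)`. -/
def potential (S : BSurf) : ℤ := 2 * (totGenus S : ℤ) - (nComp S : ℤ)


def wComp (C : SurfComp) : ℕ := max 1 (C.genus + C.boundary)

def W (S : BSurf) : ℕ := (S.map wComp).sum

lemma W_add (S S' : BSurf) : W (S + S') = W S + W S' := by
  simp [W]

lemma W_erase {C : SurfComp} {S : BSurf} (hC : C ∈ S) :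
    W S = wComp C + W (S.erase C) := by
  conv_lhs => rw [← Multiset.cons_erase hC]
  simp [W]

lemma nComp_le_W (S : BSurf) : nComp S ≤ W S := by
  induction S using Multiset.induction with
  | empty => simp [nComp, W]
  | cons a s ih =>
    simp only [nComp, W, Multiset.card_cons, Multiset.map_cons, Multiset.sum_cons] at *
    have : 1 ≤ wComp a := le_max_left _ _
    omega

lemma W_le (S : BSurf) : W S ≤ nComp S + totGenus S + totBoundary S := by
  induction S using Multiset.induction with
  | empty => simp [nComp, W, totGenus, totBoundary]
  | cons a s ih =>
    simp only [nComp, W, totGenus, totBoundary, Multiset.card_cons, Multiset.map_cons,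
      Multiset.sum_cons] at *
    have : wComp a ≤ 1 + a.genus + a.boundary := by
      simp only [wComp]; omega
    omega

lemma W_mono {S S' : BSurf} (h : EssCut S S') : W S' ≤ W S := by
  rcases h with ⟨C, hC, d, hd, hdg, rfl⟩ | ⟨C, hC, C₁, C₂, hg, hb, h1, h2, rfl⟩
  · rw [W_add, W_erase hC]
    have : wComp ⟨C.genus - d, C.boundary⟩ ≤ wComp C := by
      simp only [wComp]; omega
    simpa [W] using by omega
  · rw [W_add, W_erase hC]
    have h12 : wComp C₁ + wComp C₂ ≤ wComp C := by
      simp only [wComp]; omega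
    have : W ({C₁, C₂} : BSurf) = wComp C₁ + wComp C₂ := by simp [W]
    omega

/-- if `S'` is obtained from a surface `S` with `k` components, total
Euler genus `g` and `b` boundary components by a sequence of essential cutting
operations, then `S'` has at most `k + g + b` connected components. -/
theorem essCut_components_le (S T : BSurf) (k g b : ℕ)
    (hk : nComp S = k) (hg : totGenus S = g) (hb : totBoundary S = b)
    (h : Relation.ReflTransGen EssCut S T) :
    nComp T ≤ k + g + b := by
  have hW : W T ≤ W S := by
    induction h with
    | refl => exact le_rfl
    | tail _ hstep ih => exact le_trans (W_mono hstep) ih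
  have := nComp_le_W T
  have := W_le S
  omega
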